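/- Let bins $(bin_k)_{k=1}^{2^N}$ be i.i.d. on $\{1,\dots,2^L\}$ where $bin_k$ is the rank (in decreasing probability order) of an $L$-bit string drawn i.i.d. Bernoulli($p$), $0 < p \le 1/2$. Then $E[G] = 2^N \cdot E[bin_1]$ where $E[bin_1] \le 2^{L H_{1/2}(p)}$ and $E[bin_1] \ge (1 + L\ln 2)^{-1} 2^{L H_{1/2}(p)}$, so the total average guesswork satisfies $(1+L\ln 2)^{-1} 2^{N + L H_{1/2}(p)} \le E[G] \le 2^{N + L H_{1/2}(p)}$. -/

import Mathlib

open Real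

lemma sum_pow_card (L : ℕ) (a b : ℝ) :
    ∑ x : Fin L → Bool, a ^ (Finset.univ.filter fun i => x i = true).card *
      b ^ (Finset.univ.filter fun i => x i = false).card = (a + b) ^ L := by
  have h : ∀ x : Fin L → Bool, a ^ (Finset.univ.filter fun i => x i = true).card *
      b ^ (Finset.univ.filter fun i => x i = false).card
      = ∏ i, (if x i = true then a else b) := by
    intro x
    rw [Finset.prod_ite, Finset.prod_const, Finset.prod_const]
    congr 1
    simp [Bool.not_eq_true]
  simp_rw [h]
  rw [← Fintype.prod_sum (fun (_ : Fin L) (j : Bool) => if j = true then a else b)]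
  simp [add_comm]

lemma harmonic_le (n : ℕ) : ∑ k ∈ Finset.range n, (1 : ℝ) / (k + 1) ≤ 1 + Real.log n := by
  induction n with
  | zero => simp
  | succ n ih =>
    rcases Nat.eq_zero_or_pos n with h | h
    · subst h; simp
    rw [Finset.sum_range_succ]
    have hlog : Real.log n + 1 / (n + 1) ≤ Real.log (n + 1) := by
      have h1 : Real.log ((n : ℝ) / (n + 1)) ≤ (n : ℝ) / (n + 1) - 1 :=
        Real.log_le_sub_one_of_pos (by positivity)
      have h2 : Real.log ((n : ℝ) / (n + 1)) = Real.log n - Real.log (n + 1) := by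
        rw [Real.log_div (by positivity) (by positivity)]
      have h3 : (n : ℝ) / (n + 1) - 1 = -(1 / (n + 1)) := by field_simp; ring
      rw [h2, h3] at h1
      linarith
    push_cast
    linarith [ih]

lemma sqrt_pow' {p : ℝ} (hp : 0 ≤ p) (a : ℕ) : Real.sqrt (p ^ a) = Real.sqrt p ^ a := by
  rw [show p ^ a = (Real.sqrt p ^ a) ^ 2 by
      rw [← pow_mul, mul_comm, pow_mul, Real.sq_sqrt hp],
    Real.sqrt_sq (by positivity)]


/-- Binary Rényi entropy of order 1/2. -/
noncomputable def Hhalf (p : ℝ) : ℝ :=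
  2 * Real.logb 2 (Real.sqrt p + Real.sqrt (1 - p))

/-- Average guesswork of an idealized MAC with biased i.i.d. key: the bins are
i.i.d., each the rank (most-probable-first) of an `L`-bit i.i.d. Bernoulli(p)
string, so `E[G] = 2^N E[bin₁]`, and Arikan's bounds give
`(1+L ln 2)⁻¹ 2^{N + L H_{1/2}(p)} ≤ E[G] ≤ 2^{N + L H_{1/2}(p)}`. -/
theorem mac_biased_average_guesswork (N L : ℕ) (hN : 0 < N) (hL : 0 < L)
    (p : ℝ) (hp0 : 0 < p) (hp : p ≤ 1 / 2)
    (rank : (Fin L → Bool) ≃ Fin (2 ^ L))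
    (Pw : (Fin L → Bool) → ℝ)
    (hPw : ∀ x, Pw x =
      p ^ (Finset.univ.filter fun i => x i = true).card *
        (1 - p) ^ (Finset.univ.filter fun i => x i = false).card)
    (hdec : ∀ x x' : Fin L → Bool, rank x ≤ rank x' → Pw x' ≤ Pw x) :
    (1 + (L : ℝ) * Real.log 2)⁻¹ * (2 : ℝ) ^ ((N : ℝ) + (L : ℝ) * Hhalf p) ≤
        (2 : ℝ) ^ N * ∑ x, ((rank x : ℕ) + 1 : ℝ) * Pw x ∧
      (2 : ℝ) ^ N * ∑ x, ((rank x : ℕ) + 1 : ℝ) * Pw x ≤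
        (2 : ℝ) ^ ((N : ℝ) + (L : ℝ) * Hhalf p) := by
  have hq : 0 < 1 - p := by linarith
  set s : ℝ := Real.sqrt p + Real.sqrt (1 - p) with hs_def
  have hs : 0 < s := by positivity
  have hPpos : ∀ x, 0 < Pw x := by
    intro x; rw [hPw]; positivity
  set Q : (Fin L → Bool) → ℝ := fun x => Real.sqrt (Pw x) with hQ_def
  have hQpos : ∀ x, 0 < Q x := fun x => Real.sqrt_pos.2 (hPpos x)
  have hQsq : ∀ x, Q x ^ 2 = Pw x := fun x => Real.sq_sqrt (hPpos x).le
  have hsum : ∑ x, Q x = s ^ L := by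
    have : ∀ x : Fin L → Bool, Q x =
        Real.sqrt p ^ (Finset.univ.filter fun i => x i = true).card *
        Real.sqrt (1 - p) ^ (Finset.univ.filter fun i => x i = false).card := by
      intro x
      rw [hQ_def]
      simp only [hPw x]
      rw [Real.sqrt_mul (by positivity), sqrt_pow' hp0.le, sqrt_pow' hq.le]
    simp_rw [this]
    exact sum_pow_card L _ _
  set E : ℝ := ∑ x, ((rank x : ℕ) + 1 : ℝ) * Pw x with hE_def
  have hEnn : 0 ≤ E :=
    Finset.sum_nonneg fun x _ => mul_nonneg (by positivity) (hPpos x).le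
  -- rank + 1 as a sum of indicators
  have hrank : ∀ x, ((rank x : ℕ) + 1 : ℝ) =
      ∑ x', (if rank x' ≤ rank x then (1 : ℝ) else 0) := by
    intro x
    have e1 : (∑ x' : Fin L → Bool, if rank x' ≤ rank x then (1 : ℝ) else 0) =
        ∑ j : Fin (2 ^ L), if j ≤ rank x then (1 : ℝ) else 0 :=
      Equiv.sum_comp rank (fun j : Fin (2 ^ L) => if j ≤ rank x then (1 : ℝ) else 0)
    rw [e1, Finset.sum_boole]
    have : (Finset.univ.filter fun j : Fin (2 ^ L) => j ≤ rank x) = Finset.Iic (rank x) := by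
      ext j; simp
    rw [this, Fin.card_Iic]
    push_cast; ring
  -- upper bound pointwise
  have hupper : E ≤ s ^ L * s ^ L := by
    have key : ∀ x, ((rank x : ℕ) + 1 : ℝ) * Pw x ≤ s ^ L * Q x := by
      intro x
      have h1 : ((rank x : ℕ) + 1 : ℝ) ≤ s ^ L / Q x := by
        rw [hrank x, ← hsum, Finset.sum_div]
        apply Finset.sum_le_sum
        intro x' _
        split_ifs with h
        · rw [le_div_iff₀ (hQpos x), one_mul]
          exact Real.sqrt_le_sqrt (hdec x' x h)
        · positivity
      calc ((rank x : ℕ) + 1 : ℝ) * Pw x ≤ s ^ L / Q x * Pw x :=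
            mul_le_mul_of_nonneg_right h1 (hPpos x).le
        _ = s ^ L * Q x := by
            rw [div_mul_eq_mul_div, eq_comm, eq_div_iff (hQpos x).ne']
            rw [← hQsq x]; ring
    calc E ≤ ∑ x, s ^ L * Q x := Finset.sum_le_sum fun x _ => key x
      _ = s ^ L * s ^ L := by rw [← Finset.mul_sum, hsum]
  -- lower bound via Cauchy-Schwarz and harmonic sum
  have hCS : (s ^ L) ^ 2 ≤ E * ∑ x, 1 / ((rank x : ℕ) + 1 : ℝ) := by
    rw [← hsum]
    apply Finset.sum_sq_le_sum_mul_sum_of_sq_eq_mul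
    · intro x _; exact mul_nonneg (by positivity) (hPpos x).le
    · intro x _; positivity
    · intro x _
      rw [hQsq x]
      field_simp
  have hharm : ∑ x, 1 / ((rank x : ℕ) + 1 : ℝ) ≤ 1 + (L : ℝ) * Real.log 2 := by
    have h1 : ∑ x, 1 / ((rank x : ℕ) + 1 : ℝ) =
        ∑ k ∈ Finset.range (2 ^ L), (1 : ℝ) / (k + 1) := by
      calc ∑ x, 1 / ((rank x : ℕ) + 1 : ℝ)
            = ∑ j : Fin (2 ^ L), 1 / ((j : ℕ) + 1 : ℝ) :=
              Equiv.sum_comp rank (fun j : Fin (2 ^ L) => 1 / ((j : ℕ) + 1 : ℝ))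
        _ = ∑ k ∈ Finset.range (2 ^ L), (1 : ℝ) / (k + 1) :=
              Fin.sum_univ_eq_sum_range (fun k => (1 : ℝ) / (k + 1)) _
    rw [h1]
    calc ∑ k ∈ Finset.range (2 ^ L), (1 : ℝ) / (k + 1) ≤ 1 + Real.log (2 ^ L : ℕ) :=
          harmonic_le _
      _ = 1 + (L : ℝ) * Real.log 2 := by
          push_cast
          rw [Real.log_pow]
  -- rewrite the rpow
  have hLH : (L : ℝ) * Hhalf p = Real.logb 2 s * ((2 * L : ℕ) : ℝ) := by
    unfold Hhalf
    push_cast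
    ring
  have hpow : (2 : ℝ) ^ ((N : ℝ) + (L : ℝ) * Hhalf p) = 2 ^ N * (s ^ L * s ^ L) := by
    rw [Real.rpow_add two_pos, Real.rpow_natCast, hLH, Real.rpow_mul two_pos.le,
      Real.rpow_logb two_pos (by norm_num) hs, Real.rpow_natCast, two_mul, pow_add]
  have hlogpos : (0 : ℝ) < 1 + (L : ℝ) * Real.log 2 := by
    have := Real.log_pos (by norm_num : (1 : ℝ) < 2)
    have : (0 : ℝ) ≤ (L : ℝ) * Real.log 2 := by positivity
    linarith
  constructor
  · rw [hpow, inv_mul_le_iff₀ hlogpos]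
    have h2 : s ^ L * s ^ L ≤ E * (1 + (L : ℝ) * Real.log 2) := by
      calc s ^ L * s ^ L = (s ^ L) ^ 2 := by ring
        _ ≤ E * ∑ x, 1 / ((rank x : ℕ) + 1 : ℝ) := hCS
        _ ≤ E * (1 + (L : ℝ) * Real.log 2) := mul_le_mul_of_nonneg_left hharm hEnn
    have h3 : (0 : ℝ) ≤ (2 : ℝ) ^ N := by positivity
    nlinarith [mul_le_mul_of_nonneg_left h2 h3]
  · rw [hpow]
    exact mul_le_mul_of_nonneg_left hupper (by positivity)
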